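/- Let X, Y be nonnegative essentially bounded random variables with X ∧ Y = 0 P-a.s. (pointwise minimum). Then m(X|𝓗) ∧ M(Y|𝓗) = 0 P-a.s. -/

import Mathlib

open MeasureTheory Filter

/-- A real random variable is essentially bounded w.r.t. the measure `P`. -/
def EssBdd {Ω : Type*} {F : MeasurableSpace Ω} (P : @Measure Ω F) (X : Ω → ℝ) : Prop :=
  ∃ C : ℝ, ∀ᵐ ω ∂P, |X ω| ≤ C

/-- `Y` is the conditional essential supremum `M(X|H)` of `X` given the sub-σ-algebra `H`:
`Y` is `H`-measurable, essentially bounded, `X ≤ Y` a.s., and `Y` is a.s. below every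
`H`-measurable `Z` with `X ≤ Z` a.s. -/
def IsCondEssSup {Ω : Type*} {F : MeasurableSpace Ω} (P : @Measure Ω F)
    (H : MeasurableSpace Ω) (X Y : Ω → ℝ) : Prop :=
  Measurable[H] Y ∧ EssBdd P Y ∧ (∀ᵐ ω ∂P, X ω ≤ Y ω) ∧
    ∀ Z : Ω → ℝ, Measurable[H] Z → (∀ᵐ ω ∂P, X ω ≤ Z ω) → ∀ᵐ ω ∂P, Y ω ≤ Z ω

/-- `Y` is the conditional essential infimum `m(X|H) = -M(-X|H)`. -/
def IsCondEssInf {Ω : Type*} {F : MeasurableSpace Ω} (P : @Measure Ω F)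
    (H : MeasurableSpace Ω) (X Y : Ω → ℝ) : Prop :=
  IsCondEssSup P H (fun ω => -X ω) (fun ω => -Y ω)

/-- If `X, Y ≥ 0` are a.s. disjoint (`X ∧ Y = 0` a.s.) then `m(X|H) ∧ M(Y|H) = 0` a.s. -/
theorem condEssInf_min_condEssSup_of_disjoint {Ω : Type*} [F : MeasurableSpace Ω]
    (P : Measure Ω) [IsProbabilityMeasure P] (H : MeasurableSpace Ω) (hH : H ≤ F)
    (X Y mX MY : Ω → ℝ) (hX : EssBdd P X) (hY : EssBdd P Y)
    (hXpos : ∀ᵐ ω ∂P, 0 ≤ X ω) (hYpos : ∀ᵐ ω ∂P, 0 ≤ Y ω)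
    (hdisj : ∀ᵐ ω ∂P, min (X ω) (Y ω) = 0)
    (hmX : IsCondEssInf P H X mX) (hMY : IsCondEssSup P H Y MY) :
    ∀ᵐ ω ∂P, min (mX ω) (MY ω) = 0 := by
  obtain ⟨hmXmeas, _, hle, hmin⟩ := hmX
  obtain ⟨hMYmeas, _, hYle, hMYmin⟩ := hMY
  have h1 : ∀ᵐ ω ∂P, mX ω ≤ X ω := by filter_upwards [hle] with ω h; linarith
  have hmX0 : ∀ᵐ ω ∂P, 0 ≤ mX ω := by
    have := hmin (fun _ => 0) measurable_const
      (by filter_upwards [hXpos] with ω h; simpa using h)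
    filter_upwards [this] with ω h; simpa using h
  have hMY0 : ∀ᵐ ω ∂P, 0 ≤ MY ω := by filter_upwards [hYpos, hYle] with ω ha hb; linarith
  have hmXm : Measurable[H] mX := by
    have := hmXmeas.neg; simpa [Pi.neg_def] using this
  set Z : Ω → ℝ := fun ω => if 0 < min (mX ω) (MY ω) then 0 else MY ω with hZ
  have hZmeas : Measurable[H] Z := by
    exact Measurable.ite (measurableSet_lt measurable_const (hmXm.min hMYmeas))
      measurable_const hMYmeas
  have hYZ : ∀ᵐ ω ∂P, Y ω ≤ Z ω := by
    filter_upwards [h1, hdisj, hYpos, hYle] with ω ha hb hc hd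
    simp only [hZ]
    split_ifs with h
    · have hx : 0 < X ω := lt_of_lt_of_le (lt_of_lt_of_le h (min_le_left _ _)) ha
      rcases min_eq_iff.mp hb with h' | h' <;> linarith [h'.1]
    · exact hd
  have hfin := hMYmin Z hZmeas hYZ
  filter_upwards [hfin, hmX0, hMY0] with ω h h2 h3
  simp only [hZ] at h
  split_ifs at h with hc
  · exact absurd h (not_le.mpr (lt_of_lt_of_le hc (min_le_right _ _)))
  · exact le_antisymm (not_lt.mp hc) (le_min h2 h3)
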